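/- Let Ω be a bounded domain, r ≥ 2, D positive semidefinite continuous, and u ∈ C¹(closure(Ω)) with u > 0. Then ∫_Ω (∇u · D∇u)^{r/(r+1)} ≤ r ∫_Ω u^r ln u + |Ω| + ∫_Ω (∇u · D∇u)/u. -/

import Mathlib

open MeasureTheory Real Matrix

/-- Gradient of a scalar field via `fderiv`. -/
noncomputable def grad {n : ℕ} (f : (Fin n → ℝ) → ℝ) (x : Fin n → ℝ) : Fin n → ℝ :=
  fun i => fderiv ℝ f x (Pi.single i 1)

open Filter Set Topology

lemma ptwise {z Q r : ℝ} (hz : 0 < z) (hQ : 0 ≤ Q) (hr : 2 ≤ r) :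
    Q ^ (r/(r+1)) ≤ r * (z ^ r * Real.log z) + 1 + Q / z := by
  have hr0 : (0:ℝ) < r := by linarith
  have hr1 : (0:ℝ) < r + 1 := by linarith
  have hQz : 0 ≤ Q / z := div_nonneg hQ hz.le
  have hzr : (0:ℝ) ≤ z ^ r := rpow_nonneg hz.le r
  have hconj : (r+1).HolderConjugate ((r+1)/r) := by
    constructor
    · rw [inv_div]; field_simp; ring
    · linarith
    · positivity
  have hid : Q ^ (r/(r+1)) = (z ^ r) ^ (1/(r+1)) * (Q/z) ^ (r/(r+1)) := by
    rw [div_rpow hQ hz.le, ← rpow_mul hz.le]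
    rw [show r * (1/(r+1)) = r/(r+1) by ring]
    field_simp
  have hy := Real.young_inequality_of_nonneg (rpow_nonneg hzr (1/(r+1)))
    (rpow_nonneg hQz (r/(r+1))) hconj
  rw [← rpow_mul hzr, ← rpow_mul hQz] at hy
  rw [show (1/(r+1)) * (r+1) = 1 by field_simp, show (r/(r+1)) * ((r+1)/r) = 1 by
    field_simp] at hy
  rw [rpow_one, rpow_one] at hy
  have step1 : Q ^ (r/(r+1)) ≤ z ^ r + Q / z := by
    rw [hid]
    refine hy.trans ?_
    have h1 : z ^ r / (r+1) ≤ z ^ r := by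
      apply div_le_self hzr; linarith
    have h2 : Q / z / ((r+1)/r) ≤ Q / z := by
      apply div_le_self hQz; rw [le_div_iff₀ hr0]; linarith
    linarith
  have step2 : z ^ r ≤ r * (z ^ r * Real.log z) + 1 := by
    rw [rpow_def_of_pos hz]
    set t := Real.log z * r with ht
    have h1 : -t + 1 ≤ exp (-t) := add_one_le_exp (-t)
    have h2 : exp t * exp (-t) = 1 := by rw [← exp_add]; simp
    have h4 := mul_le_mul_of_nonneg_left h1 (exp_pos t).le
    have h5 : r * (exp t * Real.log z) = t * exp t := by rw [ht]; ring
    nlinarith [exp_pos t]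
  linarith

lemma fderiv_bdd {E : Type*} [NormedAddCommGroup E] [NormedSpace ℝ E] {u : E → ℝ}
    {Ω : Set E} (hΩ : IsOpen Ω) (hK : IsCompact (closure Ω))
    (hu : ContDiffOn ℝ 1 u (closure Ω)) :
    ∃ C : ℝ, 0 ≤ C ∧ ∀ x ∈ Ω, ‖fderiv ℝ u x‖ ≤ C := by
  rcases Set.eq_empty_or_nonempty Ω with hne | hne
  · exact ⟨0, le_refl _, by simp [hne]⟩
  have loc : ∀ x ∈ closure Ω, ∃ V ∈ 𝓝 x, ∃ C : ℝ, ∀ y ∈ Ω ∩ V, ‖fderiv ℝ u y‖ ≤ C := by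
    intro x hx
    have h1 : ContDiffWithinAt ℝ (0 + 1) u (closure Ω) x := by
      exact_mod_cast hu x hx
    obtain ⟨t, ht, -, f', hf', hf'c⟩ :=
      (contDiffWithinAt_succ_iff_hasFDerivWithinAt (by simp)).1 h1
    rw [Set.insert_eq_self.2 hx] at ht
    obtain ⟨W₁, hW₁o, hxW₁, hW₁⟩ := mem_nhdsWithin.1 ht
    have hcont : ContinuousWithinAt f' t x := hf'c.continuousWithinAt
    have hev : ∀ᶠ y in 𝓝[t] x, ‖f' y‖ < ‖f' x‖ + 1 :=
      (hcont.norm.eventually_lt_const (by linarith))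
    obtain ⟨W₂, hW₂o, hxW₂, hW₂⟩ := mem_nhdsWithin.1 hev
    refine ⟨W₁ ∩ W₂, (hW₁o.inter hW₂o).mem_nhds ⟨hxW₁, hxW₂⟩, ‖f' x‖ + 1, ?_⟩
    rintro y ⟨hyΩ, hyW₁, hyW₂⟩
    have hyt : y ∈ t := hW₁ ⟨hyW₁, subset_closure hyΩ⟩
    have htny : t ∈ 𝓝 y := by
      apply Filter.mem_of_superset ((hΩ.inter hW₁o).mem_nhds ⟨hyΩ, hyW₁⟩)
      intro z ⟨hz1, hz2⟩; exact hW₁ ⟨hz2, subset_closure hz1⟩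
    have : fderiv ℝ u y = f' y := ((hf' y hyt).hasFDerivAt htny).fderiv
    rw [this]
    exact (hW₂ ⟨hyW₂, hyt⟩).le
  choose! V hV C hC using loc
  obtain ⟨s, hs, hcover⟩ := hK.elim_nhds_subcover V (fun x hx => hV x hx)
  have hsne : s.Nonempty := by
    rcases hne with ⟨x₀, hx₀⟩
    rcases Set.mem_iUnion₂.1 (hcover (subset_closure hx₀)) with ⟨x, hx, -⟩
    exact ⟨x, hx⟩
  refine ⟨max 0 (s.sup' hsne C), le_max_left _ _, ?_⟩
  intro y hy
  rcases Set.mem_iUnion₂.1 (hcover (subset_closure hy)) with ⟨x, hx, hyV⟩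
  exact le_trans (hC x (hs x hx) y ⟨hy, hyV⟩)
    (le_max_of_le_right (Finset.le_sup' C hx))

/-- Young-type estimate
`∫ (∇u·D∇u)^{r/(r+1)} ≤ r ∫ u^r ln u + |Ω| + ∫ (∇u·D∇u)/u`. -/
theorem stmt12 (n : ℕ) (Ω : Set (Fin n → ℝ)) (hΩ : IsOpen Ω) (hΩb : Bornology.IsBounded Ω)
    (r : ℝ) (hr : 2 ≤ r)
    (D : (Fin n → ℝ) → Matrix (Fin n) (Fin n) ℝ)
    (hDc : ContinuousOn D (closure Ω))
    (hDpsd : ∀ x ∈ closure Ω, (D x).PosSemidef)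
    (u : (Fin n → ℝ) → ℝ)
    (hu : ContDiffOn ℝ 1 u (closure Ω))
    (hupos : ∀ x ∈ closure Ω, 0 < u x) :
    ∫ x in Ω, (grad u x ⬝ᵥ (D x).mulVec (grad u x)) ^ (r / (r + 1))
      ≤ r * (∫ x in Ω, u x ^ r * Real.log (u x)) + (volume Ω).toReal
        + ∫ x in Ω, (grad u x ⬝ᵥ (D x).mulVec (grad u x)) / u x := by
  rcases Set.eq_empty_or_nonempty Ω with hemp | hne
  · simp [hemp]
  have hΩK : Ω ⊆ closure Ω := subset_closure
  have hKc : IsCompact (closure Ω) := hΩb.isCompact_closure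
  have hKne : (closure Ω).Nonempty := hne.closure
  set Q : (Fin n → ℝ) → ℝ := fun x => grad u x ⬝ᵥ (D x).mulVec (grad u x) with hQdef
  -- nonnegativity of Q
  have hQ0 : ∀ x ∈ closure Ω, 0 ≤ Q x := by
    intro x hx
    simpa using (hDpsd x hx).dotProduct_mulVec_nonneg (grad u x)
  -- gradient bound
  obtain ⟨C₁, hC₁0, hC₁⟩ := fderiv_bdd hΩ hKc hu
  have hgrad : ∀ x ∈ Ω, ∀ i, |grad u x i| ≤ C₁ := by
    intro x hx i
    have h1 : ‖(Pi.single i 1 : Fin n → ℝ)‖ ≤ 1 := by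
      rw [pi_norm_le_iff_of_nonneg zero_le_one]
      intro j
      rcases eq_or_ne j i with rfl | hij
      · simp
      · simp [Pi.single_apply, hij]
    calc |grad u x i| = ‖fderiv ℝ u x ((Pi.single i 1 : Fin n → ℝ))‖ := rfl
      _ ≤ ‖fderiv ℝ u x‖ * ‖(Pi.single i 1 : Fin n → ℝ)‖ := (fderiv ℝ u x).le_opNorm _
      _ ≤ C₁ * 1 := mul_le_mul (hC₁ x hx) h1 (norm_nonneg _) hC₁0
      _ = C₁ := mul_one _
  -- bound on D
  set dB : (Fin n → ℝ) → ℝ := fun x => ∑ i, ∑ j, |D x i j| with hdBdef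
  have hdBc : ContinuousOn dB (closure Ω) := by
    apply continuousOn_finset_sum
    intro i _
    apply continuousOn_finset_sum
    intro j _
    exact (((continuous_apply j).comp (continuous_apply i)).comp_continuousOn hDc).abs
  obtain ⟨xD, hxD, hxDmax⟩ := hKc.exists_isMaxOn hKne hdBc
  set CD := dB xD with hCDdef
  -- bound on Q
  have hQb : ∀ x ∈ Ω, |Q x| ≤ C₁^2 * CD := by
    intro x hx
    have key : |Q x| ≤ ∑ i, ∑ j, C₁ * (|D x i j| * C₁) := by
      calc |Q x| = |∑ i, grad u x i * ∑ j, D x i j * grad u x j| := by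
            simp [hQdef, dotProduct, Matrix.mulVec]
        _ ≤ ∑ i, |grad u x i * ∑ j, D x i j * grad u x j| := Finset.abs_sum_le_sum_abs _ _
        _ ≤ ∑ i, ∑ j, C₁ * (|D x i j| * C₁) := by
            apply Finset.sum_le_sum; intro i _
            rw [abs_mul]
            calc |grad u x i| * |∑ j, D x i j * grad u x j|
                ≤ C₁ * ∑ j, |D x i j| * C₁ := by
                  apply mul_le_mul (hgrad x hx i) ?_ (abs_nonneg _) hC₁0
                  refine (Finset.abs_sum_le_sum_abs _ _).trans ?_
                  apply Finset.sum_le_sum; intro j _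
                  rw [abs_mul]
                  exact mul_le_mul_of_nonneg_left (hgrad x hx j) (abs_nonneg _)
              _ = ∑ j, C₁ * (|D x i j| * C₁) := by rw [Finset.mul_sum]
    refine key.trans ?_
    have heq : (∑ i, ∑ j, C₁ * (|D x i j| * C₁)) = C₁^2 * dB x := by
      rw [hdBdef, Finset.mul_sum]
      apply Finset.sum_congr rfl; intro i _
      rw [Finset.mul_sum]
      apply Finset.sum_congr rfl; intro j _
      ring
    rw [heq]
    exact mul_le_mul_of_nonneg_left (hxDmax (hΩK hx)) (sq_nonneg C₁)
  set B := C₁^2 * CD with hBdef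
  have hB0 : 0 ≤ B := le_trans (abs_nonneg _) (hQb _ hne.choose_spec)
  -- min of u
  obtain ⟨xm, hxm, hmin⟩ := hKc.exists_isMinOn hKne hu.continuousOn
  have hm0 : 0 < u xm := hupos xm hxm
  -- measurability
  have hΩm : MeasurableSet Ω := hΩ.measurableSet
  have hvol : volume Ω < ⊤ := hΩb.measure_lt_top
  have hQm : AEMeasurable Q (volume.restrict Ω) := by
    have hgradm : ∀ i, Measurable (fun x => grad u x i) := fun i =>
      measurable_fderiv_apply_const ℝ u (Pi.single i 1)
    have hDm : ∀ i j, AEMeasurable (fun x => D x i j) (volume.restrict Ω) := by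
      intro i j
      exact (((continuous_apply j).comp (continuous_apply i)).comp_continuousOn
        (hDc.mono hΩK)).aemeasurable hΩm
    simp only [hQdef, dotProduct, Matrix.mulVec]
    apply Finset.aemeasurable_fun_sum
    intro i _
    apply ((hgradm i).aemeasurable).mul
    apply Finset.aemeasurable_fun_sum
    intro j _
    exact (hDm i j).mul ((hgradm j).aemeasurable)
  have hum : AEMeasurable u (volume.restrict Ω) :=
    (hu.continuousOn.mono hΩK).aemeasurable hΩm
  -- integrability of g = Q ^ (r/(r+1))
  have he0 : 0 ≤ r / (r+1) := by positivity
  have hg_int : IntegrableOn (fun x => Q x ^ (r/(r+1))) Ω := by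
    refine ⟨((Real.continuous_rpow_const he0).measurable.comp_aemeasurable hQm).aestronglyMeasurable, ?_⟩
    apply HasFiniteIntegral.restrict_of_bounded (C := B ^ (r/(r+1))) hvol
    refine (ae_restrict_iff' hΩm).2 (Filter.Eventually.of_forall fun x hx => ?_)
    rw [Real.norm_eq_abs, abs_of_nonneg (rpow_nonneg (hQ0 x (hΩK hx)) _)]
    exact rpow_le_rpow (hQ0 x (hΩK hx)) ((le_abs_self _).trans (hQb x hx)) he0
  -- integrability of Q / u
  have hQu_int : IntegrableOn (fun x => Q x / u x) Ω := by
    refine ⟨(hQm.div hum).aestronglyMeasurable, ?_⟩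
    apply HasFiniteIntegral.restrict_of_bounded (C := B / u xm) hvol
    refine (ae_restrict_iff' hΩm).2 (Filter.Eventually.of_forall fun x hx => ?_)
    rw [Real.norm_eq_abs, abs_div, abs_of_pos (hupos x (hΩK hx))]
    exact div_le_div₀ hB0 (hQb x hx) hm0 (hmin (hΩK hx))
  -- integrability of u^r * log u
  have hf_int : IntegrableOn (fun x => u x ^ r * Real.log (u x)) Ω := by
    apply IntegrableOn.mono_set _ hΩK
    apply ContinuousOn.integrableOn_compact hKc
    exact (hu.continuousOn.rpow_const (fun x hx => Or.inl (hupos x hx).ne')).mul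
      (hu.continuousOn.log (fun x hx => (hupos x hx).ne'))
  have hw_int : IntegrableOn (fun x => r * (u x ^ r * Real.log (u x)) + 1) Ω :=
    (hf_int.const_mul r).add (integrableOn_const hvol.ne)
  -- main pointwise estimate and integration
  have key : ∫ x in Ω, Q x ^ (r/(r+1))
      ≤ ∫ x in Ω, (r * (u x ^ r * Real.log (u x)) + 1 + Q x / u x) := by
    apply setIntegral_mono_on hg_int (hw_int.add hQu_int) hΩm
    intro x hx
    exact ptwise (hupos x (hΩK hx)) (hQ0 x (hΩK hx)) hr
  calc ∫ x in Ω, Q x ^ (r/(r+1))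
      ≤ ∫ x in Ω, (r * (u x ^ r * Real.log (u x)) + 1 + Q x / u x) := key
    _ = (∫ x in Ω, (r * (u x ^ r * Real.log (u x)) + 1)) + ∫ x in Ω, Q x / u x :=
        integral_add hw_int hQu_int
    _ = ((∫ x in Ω, r * (u x ^ r * Real.log (u x))) + ∫ x in Ω, (1:ℝ))
          + ∫ x in Ω, Q x / u x := by
        rw [integral_add (hf_int.const_mul r) (integrableOn_const hvol.ne)]
    _ = r * (∫ x in Ω, u x ^ r * Real.log (u x)) + (volume Ω).toReal
          + ∫ x in Ω, Q x / u x := by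
        rw [integral_const_mul, setIntegral_const, smul_eq_mul, mul_one, Measure.real]
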